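/- Let k ≥ 2 be an integer and let Γ be a finite connected k-GNDB graph (so there exists a positive integer γ such that for every edge ab of Γ, the pair {|W_{ab}|, |W_{ba}|} equals {γ, kγ}). Then Γ is bipartite. -/
import Mathlib


/-- The set of vertices closer to `a` than to `b`. -/
def closerSet {V : Type*} (G : SimpleGraph V) (a b : V) : Set V :=
  {x | G.dist x a < G.dist x b}

/-- Let `k ≥ 2` be an integer and let `Γ` be a finite connected `k`-GNDB graph (so there
exists a positive integer `γ` such that for every edge `ab`, the pair
`{|W_{ab}|, |W_{ba}|}` equals `{γ, kγ}`). Then `Γ` is bipartite. -/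
theorem stmt_0 {V : Type*} [Fintype V] (G : SimpleGraph V) (hconn : G.Connected)
    (k : ℕ) (hk : 2 ≤ k) (γ : ℕ) (hγ : 0 < γ)
    (hGNDB : ∀ a b : V, G.Adj a b →
      ({(closerSet G a b).ncard, (closerSet G b a).ncard} : Set ℕ) = {γ, k * γ}) :
    G.Colorable 2 := by
  classical
  have hne : Nonempty V := hconn.nonempty
  set T : V → ℤ := fun v => ∑ x : V, (G.dist x v : ℤ) with hT
  set d : ℤ := ((k : ℤ) - 1) * γ with hd
  have hdpos : (0 : ℤ) < d := by
    have : (2 : ℤ) ≤ (k : ℤ) := by exact_mod_cast hk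
    have hγ' : (0 : ℤ) < (γ : ℤ) := by exact_mod_cast hγ
    nlinarith
  have hdne : d ≠ 0 := hdpos.ne'
  -- ncard as a sum of indicators
  have hc : ∀ u v : V, ((closerSet G u v).ncard : ℤ) =
      ∑ x : V, (if G.dist x u < G.dist x v then (1 : ℤ) else 0) := by
    intro u v
    have h1 : (closerSet G u v).ncard =
        (Finset.univ.filter fun x => G.dist x u < G.dist x v).card := by
      rw [closerSet, Set.ncard_eq_toFinset_card']
      congr 1
      ext x
      simp
    rw [h1, Finset.card_filter]
    push_cast
    rfl
  -- key edge lemma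
  have key : ∀ a b : V, G.Adj a b → T a - T b = d ∨ T a - T b = -d := by
    intro a b hab
    have hdab : G.dist a b = 1 := (SimpleGraph.dist_eq_one_iff_adj).mpr hab
    have hdba : G.dist b a = 1 := (SimpleGraph.dist_eq_one_iff_adj).mpr hab.symm
    have h1 : ∀ x, G.dist x a ≤ G.dist x b + 1 := by
      intro x
      have := hconn.dist_triangle (u := x) (v := b) (w := a)
      omega
    have h2 : ∀ x, G.dist x b ≤ G.dist x a + 1 := by
      intro x
      have := hconn.dist_triangle (u := x) (v := a) (w := b)
      omega
    have hsum : T a - T b =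
        ((closerSet G b a).ncard : ℤ) - ((closerSet G a b).ncard : ℤ) := by
      rw [hc, hc, hT]
      rw [← Finset.sum_sub_distrib, ← Finset.sum_sub_distrib]
      apply Finset.sum_congr rfl
      intro x _
      have := h1 x
      have := h2 x
      split_ifs <;> push_cast <;> omega
    rcases Set.pair_eq_pair_iff.mp (hGNDB a b hab) with ⟨hA, hB⟩ | ⟨hA, hB⟩
    · left
      rw [hsum, hA, hB]
      push_cast
      ring
    · right
      rw [hsum, hA, hB]
      push_cast
      ring
  -- divisibility along walks
  have aux : ∀ (u v : V) (w : G.Walk u v), d ∣ T u - T v := by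
    intro u v w
    induction w with
    | nil => simp
    | @cons a c b h p ih =>
      have h1 : d ∣ T a - T c := by
        rcases key a c h with he | he
        · rw [he]
        · rw [he]; exact dvd_neg.mpr dvd_rfl
      have : T a - T b = (T a - T c) + (T c - T b) := by ring
      rw [this]
      exact dvd_add h1 ih
  obtain ⟨v0⟩ := hne
  have hdvd : ∀ v : V, d ∣ T v - T v0 := by
    intro v
    obtain ⟨w⟩ := hconn.preconnected v v0
    exact aux v v0 w
  -- the 2-coloring
  let col : V → ZMod 2 := fun v => (((T v - T v0) / d : ℤ) : ZMod 2)
  have hvalid : ∀ {a b : V}, G.Adj a b → col a ≠ col b := by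
    intro a b hab
    obtain ⟨m, hm⟩ := hdvd a
    obtain ⟨n, hn⟩ := hdvd b
    have hqa : (T a - T v0) / d = m := by rw [hm]; exact Int.mul_ediv_cancel_left m hdne
    have hqb : (T b - T v0) / d = n := by rw [hn]; exact Int.mul_ediv_cancel_left n hdne
    have hmn : m - n = 1 ∨ m - n = -1 := by
      have heq : d * (m - n) = T a - T b := by rw [mul_sub, ← hm, ← hn]; ring
      rcases key a b hab with he | he
      · left
        have : d * (m - n) = d * 1 := by rw [heq, he]; ring
        exact mul_left_cancel₀ hdne this
      · right
        have : d * (m - n) = d * (-1) := by rw [heq, he]; ring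
        exact mul_left_cancel₀ hdne this
    simp only [col, hqa, hqb]
    intro hcon
    have : ((m - n : ℤ) : ZMod 2) = 0 := by push_cast [hcon]; ring
    rcases hmn with he | he <;> rw [he] at this <;> revert this <;> decide
  have C : G.Coloring (ZMod 2) := SimpleGraph.Coloring.mk col hvalid
  have := C.colorable
  simpa using this
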